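/- Let A_0 ⊆ A_1 ⊆ … ⊆ A_{n-1} ⊆ B be a chain of fields and let T_n = A_0 + A_1X + … + A_{n-1}X^{n-1} + X^nB[X]. Then every nonzero prime ideal of T_n is a maximal ideal. -/

import Mathlib

/-- The polynomial composite `T_n = A_0 + A_1·X + … + A_{n-1}·X^{n-1} + X^n·B[X]` attached to a
monotone chain `A : ℕ → Subring B`: the subring of `B[X]` of polynomials whose `i`-th
coefficient lies in `A i` for every `i < n`. -/
def compositeChain {B : Type*} [CommRing B] (n : ℕ) (A : ℕ → Subring B) (hA : Monotone A) :
    Subring (Polynomial B) where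
  carrier := {f : Polynomial B | ∀ i < n, f.coeff i ∈ A i}
  mul_mem' {f g} hf hg := by
    intro i hi
    rw [Polynomial.coeff_mul]
    refine sum_mem fun x hx => ?_
    rw [Finset.HasAntidiagonal.mem_antidiagonal] at hx
    have h1 : x.1 ≤ i := by omega
    have h2 : x.2 ≤ i := by omega
    exact mul_mem (hA h1 (hf x.1 (lt_of_le_of_lt h1 hi)))
      (hA h2 (hg x.2 (lt_of_le_of_lt h2 hi)))
  one_mem' := by
    intro i hi
    rw [Polynomial.coeff_one]
    split
    · exact one_mem _
    · exact zero_mem _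
  add_mem' {f g} hf hg := by
    intro i hi
    rw [Polynomial.coeff_add]
    exact add_mem (hf i hi) (hg i hi)
  zero_mem' := by
    intro i hi
    rw [Polynomial.coeff_zero]
    exact zero_mem _
  neg_mem' {f} hf := by
    intro i hi
    rw [Polynomial.coeff_neg]
    exact neg_mem (hf i hi)

theorem mem_compositeChain {B : Type*} [CommRing B] (n : ℕ) (A : ℕ → Subring B)
    (hA : Monotone A) (f : Polynomial B) :
    f ∈ compositeChain n A hA ↔ ∀ i < n, f.coeff i ∈ A i := Iff.rfl

/-- For a chain of fields `A_0 ⊆ … ⊆ A_{n-1} ⊆ B` and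
`T_n = A_0 + A_1·X + … + A_{n-1}·X^{n-1} + X^n·B[X]`, every nonzero prime ideal of `T_n`
is maximal. -/
theorem compositeChain_prime_isMaximal {B : Type*} [Field B]
    (n : ℕ) (hn : 0 < n) (A : ℕ → Subfield B) (hA : Monotone A)
    (P : Ideal (compositeChain n (fun i => (A i).toSubring)
      (fun _ _ h _ hx => hA h hx)))
    (hP : P.IsPrime) (hne : P ≠ ⊥) :
    P.IsMaximal := by
  classical
  obtain ⟨n', rfl⟩ : ∃ m, n = m + 1 := ⟨n - 1, by omega⟩
  revert P
  set n : ℕ := n' + 1 with hn'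
  set T := compositeChain n (fun i => (A i).toSubring) (fun _ _ h _ hx => hA h hx) with hTdef
  intro P hP hne
  have hXnT : ∀ w : Polynomial B, (Polynomial.X : Polynomial B) ^ n * w ∈ T := by
    intro w i hi
    have h0 : ((Polynomial.X : Polynomial B) ^ n * w).coeff i = 0 := by
      rw [mul_comm, Polynomial.coeff_mul_X_pow']
      rw [if_neg (by omega)]
    rw [h0]; exact zero_mem _
  set ι : Polynomial B → T := fun w => ⟨Polynomial.X ^ n * w, hXnT w⟩ with hι
  have hιval : ∀ w : Polynomial B, ((ι w : T) : Polynomial B) = Polynomial.X ^ n * w :=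
    fun _ => rfl
  -- Key claim: every element outside `P` is invertible modulo `P`.
  have key : ∀ t : T, t ∉ P → ∃ c : T, t * c - 1 ∈ P := by
    intro t ht
    by_cases hall : ∀ g : Polynomial B, ι g ∈ P
    · -- Case 1 : the conductor `X^n B[X]` is contained in `P`.
      have hnil : ∀ w : T, (w : Polynomial B).coeff 0 = 0 → w ∈ P := by
        intro w hw0
        obtain ⟨u, hu⟩ := Polynomial.X_dvd_iff.mpr hw0
        have hwn : w ^ n = ι (u ^ n) := by
          apply Subtype.ext
          push_cast [hιval]
          rw [hu, mul_pow]
        exact hP.mem_of_pow_mem n (hwn ▸ hall (u ^ n))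
      have ha : (t : Polynomial B).coeff 0 ≠ 0 := fun h => ht (hnil t h)
      have haA : (t : Polynomial B).coeff 0 ∈ A 0 := t.2 0 (by omega)
      have hinv : ((t : Polynomial B).coeff 0)⁻¹ ∈ A 0 := (A 0).inv_mem haA
      have hcT : Polynomial.C ((t : Polynomial B).coeff 0)⁻¹ ∈ T := by
        intro i hi
        rw [Polynomial.coeff_C]
        split
        · next h => subst h; exact hinv
        · exact zero_mem _
      refine ⟨⟨_, hcT⟩, hnil _ ?_⟩
      push_cast
      rw [Polynomial.coeff_sub, Polynomial.mul_coeff_zero, Polynomial.coeff_C,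
        if_pos rfl, Polynomial.coeff_one, if_pos rfl, mul_inv_cancel₀ ha, sub_self]
    · -- Case 2 : there exists `s = X^n g₀` outside `P`.
      push_neg at hall
      obtain ⟨g₀, hsP⟩ := hall
      have hmono : ∀ (w : Polynomial B) (m k : ℕ),
          ι ((Polynomial.X ^ n * g₀) ^ m * w) ∈ P →
            ι ((Polynomial.X ^ n * g₀) ^ (m + k) * w) ∈ P := by
        intro w m k hm
        have he : ι ((Polynomial.X ^ n * g₀) ^ (m + k) * w)
            = (ι g₀) ^ k * ι ((Polynomial.X ^ n * g₀) ^ m * w) := by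
          apply Subtype.ext
          push_cast [hιval]
          ring
        rw [he]
        exact Ideal.mul_mem_left _ _ hm
      -- The "saturation" of `P` in `B[X]`.
      set Q : Ideal (Polynomial B) :=
        { carrier := {g | ∃ m : ℕ, ι ((Polynomial.X ^ n * g₀) ^ m * (g₀ * g)) ∈ P},
          add_mem' := by
            rintro g h ⟨m₁, h₁⟩ ⟨m₂, h₂⟩
            refine ⟨m₁ + m₂, ?_⟩
            have h₁' := hmono _ m₁ m₂ h₁
            have h₂' := hmono _ m₂ m₁ h₂
            rw [Nat.add_comm m₂ m₁] at h₂'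
            have he : ι ((Polynomial.X ^ n * g₀) ^ (m₁ + m₂) * (g₀ * (g + h)))
                = ι ((Polynomial.X ^ n * g₀) ^ (m₁ + m₂) * (g₀ * g))
                  + ι ((Polynomial.X ^ n * g₀) ^ (m₁ + m₂) * (g₀ * h)) := by
              apply Subtype.ext
              push_cast [hιval]
              ring
            rw [he]
            exact P.add_mem h₁' h₂'
          zero_mem' := by
            refine ⟨0, ?_⟩
            have he : ι ((Polynomial.X ^ n * g₀) ^ 0 * (g₀ * 0)) = (0 : T) := by
              apply Subtype.ext
              push_cast [hιval]
              ring
            rw [he]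
            exact P.zero_mem
          smul_mem' := by
            rintro c g ⟨m, hm⟩
            refine ⟨m + 1, ?_⟩
            have he : ι ((Polynomial.X ^ n * g₀) ^ (m + 1) * (g₀ * (c • g)))
                = ι (g₀ * c) * ι ((Polynomial.X ^ n * g₀) ^ m * (g₀ * g)) := by
              apply Subtype.ext
              push_cast [hιval, smul_eq_mul]
              ring
            rw [he]
            exact Ideal.mul_mem_left _ _ hm } with hQdef
      have hQmem : ∀ g : Polynomial B,
          g ∈ Q ↔ ∃ m : ℕ, ι ((Polynomial.X ^ n * g₀) ^ m * (g₀ * g)) ∈ P :=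
        fun _ => Iff.rfl
      -- contraction of `Q` to `T` is `P`
      have hcontr : ∀ w : T, (w : Polynomial B) ∈ Q → w ∈ P := by
        intro w hw
        obtain ⟨m, hm⟩ := (hQmem _).mp hw
        have he : ι ((Polynomial.X ^ n * g₀) ^ m * (g₀ * (w : Polynomial B)))
            = (ι g₀) ^ (m + 1) * w := by
          apply Subtype.ext
          push_cast [hιval]
          ring
        rw [he] at hm
        rcases hP.mem_or_mem hm with h | h
        · exact absurd (hP.mem_of_pow_mem _ h) hsP
        · exact h
      -- `Q` is a nonzero prime ideal of `B[X]`
      obtain ⟨f, hfP, hf0⟩ := Submodule.exists_mem_ne_zero_of_ne_bot hne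
      have hfval : (f : Polynomial B) ∈ Q := by
        refine (hQmem _).mpr ⟨0, ?_⟩
        have he : ι ((Polynomial.X ^ n * g₀) ^ 0 * (g₀ * (f : Polynomial B)))
            = ι g₀ * f := by
          apply Subtype.ext
          push_cast [hιval]
          ring
        rw [he]
        exact Ideal.mul_mem_left _ _ hfP
      have hQbot : Q ≠ ⊥ := by
        intro hb
        rw [hb, Ideal.mem_bot] at hfval
        exact hf0 (Subtype.ext hfval)
      have hQprime : Q.IsPrime := by
        constructor
        · intro h
          have h1 : (1 : Polynomial B) ∈ Q := h ▸ Submodule.mem_top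
          obtain ⟨m, hm⟩ := (hQmem _).mp h1
          have he : ι ((Polynomial.X ^ n * g₀) ^ m * (g₀ * 1)) = (ι g₀) ^ (m + 1) := by
            apply Subtype.ext
            push_cast [hιval]
            ring
          rw [he] at hm
          exact hsP (hP.mem_of_pow_mem _ hm)
        · intro g h hgh
          obtain ⟨m, hm⟩ := (hQmem _).mp hgh
          have hm2 := hmono _ m (m + 2) hm
          have he : ι ((Polynomial.X ^ n * g₀) ^ (m + (m + 2)) * (g₀ * (g * h)))
              = ι ((Polynomial.X ^ n * g₀) ^ m * (g₀ * g))
                * ι ((Polynomial.X ^ n * g₀) ^ (m + 1) * (g₀ * h)) := by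
            apply Subtype.ext
            push_cast [hιval]
            ring
          rw [he] at hm2
          rcases hP.mem_or_mem hm2 with h' | h'
          · exact Or.inl ((hQmem _).mpr ⟨m, h'⟩)
          · exact Or.inr ((hQmem _).mpr ⟨m + 1, h'⟩)
      haveI := hQprime
      have hQmax : Q.IsMaximal := IsPrime.to_maximal_ideal hQbot
      -- `X ∉ Q`
      have hXQ : (Polynomial.X : Polynomial B) ∉ Q := by
        intro hX
        obtain ⟨m, hm⟩ := (hQmem _).mp hX
        have he : ι ((Polynomial.X ^ n * g₀) ^ m * (g₀ * Polynomial.X))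
              * ι (Polynomial.X ^ n' * g₀)
            = (ι g₀) ^ (m + 2) * ι 1 := by
          apply Subtype.ext
          push_cast [hιval]
          ring
        have hmem : (ι g₀) ^ (m + 2) * ι 1 ∈ P := by
          rw [← he]
          exact Ideal.mul_mem_right _ _ hm
        rcases hP.mem_or_mem hmem with h' | h'
        · exact hsP (hP.mem_of_pow_mem _ h')
        · have he2 : (ι g₀) ^ 2 = ι 1 * ι (g₀ * g₀) := by
            apply Subtype.ext
            push_cast [hιval]
            ring
          have : (ι g₀) ^ 2 ∈ P := by
            rw [he2]
            exact Ideal.mul_mem_right _ _ h'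
          exact hsP (hP.mem_of_pow_mem _ this)
      have htQ : (t : Polynomial B) ∉ Q := fun h => ht (hcontr t h)
      obtain ⟨β, q, hq, hβ⟩ := hQmax.exists_inv hXQ
      obtain ⟨r, q', hq', hr⟩ := hQmax.exists_inv htQ
      let π := Ideal.Quotient.mk Q
      have hβ1 : π β * π Polynomial.X = 1 := by
        have := congrArg π hβ
        rw [map_add, map_mul, map_one, Ideal.Quotient.eq_zero_iff_mem.mpr hq,
          add_zero] at this
        exact this
      have hr1 : π r * π (t : Polynomial B) = 1 := by
        have := congrArg π hr
        rw [map_add, map_mul, map_one, Ideal.Quotient.eq_zero_iff_mem.mpr hq',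
          add_zero] at this
        exact this
      refine ⟨ι (Polynomial.X ^ n * β ^ (2 * n) * r), hcontr _ ?_⟩
      rw [← Ideal.Quotient.eq_zero_iff_mem]
      have hval : (((t * ι (Polynomial.X ^ n * β ^ (2 * n) * r) - 1 : T)) : Polynomial B)
          = (β * Polynomial.X) ^ (2 * n) * (r * (t : Polynomial B)) - 1 := by
        push_cast [hιval]
        ring
      rw [hval, map_sub, map_mul, map_pow, map_mul, map_one]
      rw [show (Ideal.Quotient.mk Q) β * (Ideal.Quotient.mk Q) Polynomial.X = 1 from hβ1,
        map_mul,
        show (Ideal.Quotient.mk Q) r * (Ideal.Quotient.mk Q) (t : Polynomial B) = 1 from hr1,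
        one_pow, one_mul, sub_self]
  -- Conclude maximality from the key claim.
  rw [Ideal.isMaximal_iff]
  constructor
  · intro h1
    exact hP.ne_top ((Ideal.eq_top_iff_one P).mpr h1)
  · intro J x hPJ hxP hxJ
    obtain ⟨c, hc⟩ := key x hxP
    have h1 : x * c - (x * c - 1) ∈ J := J.sub_mem (J.mul_mem_right c hxJ) (hPJ hc)
    simpa using h1
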